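/- Let M ∈ ℝ^{n²×n²} be a symmetric matrix and c ∈ ℝ^{n²}, and define E(X) = [X]ᵀ M [X] + cᵀ[X] for X ∈ ℝ^{n×n}. Assume that vᵀMv < 0 for every nonzero v of the form v = [V] with V𝟙 = 0 and Vᵀ𝟙 = 0 (i.e., E is conditionally concave). Then every local minimum of E over the doubly stochastic matrices DS is a permutation matrix; in particular, min_{X∈DS} E(X) = min_{X∈Π_n} E(X) and every global minimizer of E over DS lies in Π_n. -/

import Mathlib

open Matrix

/-- The column stack (vectorization) of `X ∈ ℝ^{n×n}`: `[X] (j, i) = X i j`. -/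
def colStack {n : ℕ} (X : Matrix (Fin n) (Fin n) ℝ) : Fin n × Fin n → ℝ :=
  fun p => X p.2 p.1

/-- If `E(X) = [X]ᵀ M [X] + cᵀ [X]` is conditionally concave, i.e. `vᵀ M v < 0` for every
nonzero `v = [V]` with `V𝟙 = 0` and `Vᵀ𝟙 = 0`, then every local minimum of `E` over the
doubly stochastic matrices is a permutation matrix; in particular the minimum of `E` over `DS`
equals its minimum over the permutation matrices and every global minimizer of `E` over `DS`
is a permutation matrix. -/
theorem conditionally_concave_local_minima_are_permutations
    {n : ℕ} (M : Matrix (Fin n × Fin n) (Fin n × Fin n) ℝ) (hM : Mᵀ = M)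
    (c : Fin n × Fin n → ℝ)
    (E : Matrix (Fin n) (Fin n) ℝ → ℝ)
    (hE : ∀ X, E X = colStack X ⬝ᵥ M *ᵥ colStack X + c ⬝ᵥ colStack X)
    (hconc : ∀ V : Matrix (Fin n) (Fin n) ℝ, V ≠ 0 →
      V *ᵥ (fun _ => 1) = 0 → Vᵀ *ᵥ (fun _ => 1) = 0 →
      colStack V ⬝ᵥ M *ᵥ colStack V < 0)
    (DS : Set (Matrix (Fin n) (Fin n) ℝ))
    (hDS : DS = {X | X *ᵥ (fun _ => 1) = (fun _ => 1) ∧ Xᵀ *ᵥ (fun _ => 1) = (fun _ => 1) ∧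
      ∀ i j, 0 ≤ X i j})
    (Perm : Set (Matrix (Fin n) (Fin n) ℝ))
    (hPerm : Perm = {X | ∃ σ : Equiv.Perm (Fin n), X = σ.permMatrix ℝ}) :
    (∀ X ∈ DS, IsLocalMinOn E DS X → X ∈ Perm) ∧
      sInf (E '' DS) = sInf (E '' Perm) ∧
      (∀ X ∈ DS, (∀ Y ∈ DS, E X ≤ E Y) → X ∈ Perm) := by
  -- DS is the set of doubly stochastic matrices
  have hDSeq : DS = (doublyStochastic ℝ (Fin n) : Set (Matrix (Fin n) (Fin n) ℝ)) := by
    rw [hDS]; ext X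
    simp only [Set.mem_setOf_eq, SetLike.mem_coe, mem_doublyStochastic, mulVec_transpose,
      ← Pi.one_def]
    tauto
  -- the expansion of E along a direction
  have expand : ∀ (X W : Matrix (Fin n) (Fin n) ℝ) (t : ℝ),
      E (X + t • W) = E X
        + t * ((colStack X ⬝ᵥ M *ᵥ colStack W) + (colStack W ⬝ᵥ M *ᵥ colStack X)
            + c ⬝ᵥ colStack W)
        + t * t * (colStack W ⬝ᵥ M *ᵥ colStack W) := by
    intro X W t
    have hcs : colStack (X + t • W) = colStack X + t • colStack W := by
      funext p
      simp [colStack, Matrix.add_apply, Matrix.smul_apply]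
    rw [hE, hE, hcs]
    simp only [add_dotProduct, dotProduct_add, smul_dotProduct, dotProduct_smul,
      Matrix.mulVec_add, Matrix.mulVec_smul, smul_eq_mul]
    ring
  -- Part 1: local minima are extreme points, hence permutation matrices.
  have part1 : ∀ X ∈ DS, IsLocalMinOn E DS X → X ∈ Perm := by
    intro X hXDS hloc
    have hXds : X ∈ doublyStochastic ℝ (Fin n) := by rwa [hDSeq] at hXDS
    have hXe : X ∈ Set.extremePoints ℝ (doublyStochastic ℝ (Fin n) :
        Set (Matrix (Fin n) (Fin n) ℝ)) := by
      rw [mem_extremePoints]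
      refine ⟨hXds, ?_⟩
      intro Y hY Z hZ hseg
      obtain ⟨a, b, ha, hb, hab, hsum⟩ := hseg
      by_cases hYZ : Y = Z
      · subst hYZ
        have hXY : X = Y := by
          rw [← hsum, ← add_smul, hab, one_smul]
        exact ⟨hXY.symm, hXY.symm⟩
      · exfalso
        set W := Z - Y with hWdef
        have hYds : Y ∈ doublyStochastic ℝ (Fin n) := hY
        have hZds : Z ∈ doublyStochastic ℝ (Fin n) := hZ
        have hW0 : W ≠ 0 := sub_ne_zero.2 (Ne.symm hYZ)
        have hrow : W *ᵥ (fun _ => (1:ℝ)) = 0 := by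
          rw [show (fun _ : Fin n => (1:ℝ)) = (1 : Fin n → ℝ) from rfl, hWdef, Matrix.sub_mulVec,
            mulVec_one_of_mem_doublyStochastic hZds, mulVec_one_of_mem_doublyStochastic hYds,
            sub_self]
        have hcol : Wᵀ *ᵥ (fun _ => (1:ℝ)) = 0 := by
          rw [show (fun _ : Fin n => (1:ℝ)) = (1 : Fin n → ℝ) from rfl, mulVec_transpose, hWdef,
            Matrix.vecMul_sub, one_vecMul_of_mem_doublyStochastic hZds,
            one_vecMul_of_mem_doublyStochastic hYds, sub_self]
        have hQ : colStack W ⬝ᵥ M *ᵥ colStack W < 0 := hconc W hW0 hrow hcol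
        -- points X + t • W stay in DS for t ∈ Ioo (-b) a
        have hg : ∀ t ∈ Set.Ioo (-b) a, X + t • W ∈ DS := by
          intro t ht
          have h1 : 0 ≤ a - t := by linarith [ht.2]
          have h2 : 0 ≤ b + t := by linarith [ht.1]
          have h3 : (a - t) + (b + t) = 1 := by linarith
          have hmem := convex_doublyStochastic (R := ℝ) (n := Fin n) hYds hZds h1 h2 h3
          have heq : (a - t) • Y + (b + t) • Z = X + t • W := by
            rw [← hsum, hWdef]
            simp only [sub_smul, add_smul, smul_sub]
            abel
          rw [hDSeq]
          rwa [heq] at hmem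
        -- local minimality along the segment
        have htends : Filter.Tendsto (fun t : ℝ => X + t • W) (nhds 0) (nhdsWithin X DS) := by
          rw [tendsto_nhdsWithin_iff]
          constructor
          · have hc : Continuous fun t : ℝ => X + t • W :=
              continuous_const.add (continuous_id.smul continuous_const)
            have := hc.tendsto 0
            simpa using this
          · filter_upwards [Ioo_mem_nhds (neg_lt_zero.2 hb) ha] with t ht using hg t ht
        have hev1 : ∀ᶠ t in nhds (0:ℝ), E X ≤ E (X + t • W) := htends.eventually hloc
        have hev2 : ∀ᶠ t in nhds (0:ℝ), E X ≤ E (X + (-t) • W) := by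
          have hneg : Filter.Tendsto (fun t : ℝ => -t) (nhds (0:ℝ)) (nhds (0:ℝ)) := by
            simpa using (continuous_neg (G := ℝ)).tendsto 0
          exact hneg.eventually hev1
        have hne : ∀ᶠ t in nhdsWithin (0:ℝ) {(0:ℝ)}ᶜ, t ∈ ({(0:ℝ)}ᶜ : Set ℝ) :=
          self_mem_nhdsWithin
        obtain ⟨t, ⟨h1, h2⟩, ht0'⟩ :=
          (((hev1.and hev2).filter_mono nhdsWithin_le_nhds).and hne).exists
        have ht0 : t ≠ 0 := ht0'
        rw [expand X W t] at h1
        rw [expand X W (-t)] at h2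
        have htt : 0 < t * t := mul_self_pos.mpr ht0
        nlinarith [h1, h2, htt, hQ]
    have hXhull : X ∈ Set.extremePoints ℝ
        (convexHull ℝ {x | ∃ σ : Equiv.Perm (Fin n), σ.permMatrix ℝ = x}) := by
      rwa [doublyStochastic_eq_convexHull_permMatrix] at hXe
    have := extremePoints_convexHull_subset hXhull
    obtain ⟨σ, hσ⟩ := this
    rw [hPerm]
    exact ⟨σ, hσ.symm⟩
  refine ⟨part1, ?_⟩
  -- continuity of E
  have hco : ∀ p : Fin n × Fin n,
      Continuous fun X : Matrix (Fin n) (Fin n) ℝ => colStack X p := by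
    intro p
    exact continuous_id.matrix_elem p.2 p.1
  have hEc : Continuous E := by
    have hE' : E = fun X => colStack X ⬝ᵥ M *ᵥ colStack X + c ⬝ᵥ colStack X := funext hE
    rw [hE']
    simp only [Matrix.mulVec, dotProduct]
    apply Continuous.add
    · apply continuous_finset_sum
      intro p _
      exact (hco p).mul (continuous_finset_sum _ fun q _ => continuous_const.mul (hco q))
    · exact continuous_finset_sum _ fun p _ => continuous_const.mul (hco p)
  -- compactness and nonemptiness of DS
  have hDScompact : IsCompact DS := by
    rw [hDSeq, doublyStochastic_eq_convexHull_permMatrix]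
    exact (Set.finite_range fun σ : Equiv.Perm (Fin n) => σ.permMatrix ℝ).isCompact_convexHull (𝕜 := ℝ)
  have hDSne : DS.Nonempty := by
    rw [hDSeq]
    exact ⟨1, SetLike.mem_coe.2 (one_mem _)⟩
  obtain ⟨X₀, hX₀DS, hX₀min⟩ := hDScompact.exists_isMinOn hDSne hEc.continuousOn
  have hX₀min' : ∀ Y ∈ DS, E X₀ ≤ E Y := fun Y hY => hX₀min hY
  have hX₀loc : IsLocalMinOn E DS X₀ := by
    exact eventually_nhdsWithin_of_forall hX₀min'
  have hX₀Perm : X₀ ∈ Perm := part1 X₀ hX₀DS hX₀loc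
  have hPermSub : Perm ⊆ DS := by
    rw [hPerm, hDSeq]
    rintro x ⟨σ, rfl⟩
    exact SetLike.mem_coe.2 permMatrix_mem_doublyStochastic
  constructor
  · -- sInf equality
    have hIsLeast : IsLeast (E '' DS) (E X₀) :=
      ⟨Set.mem_image_of_mem E hX₀DS, by rintro y ⟨Y, hY, rfl⟩; exact hX₀min' Y hY⟩
    have h1 : sInf (E '' DS) = E X₀ := hIsLeast.csInf_eq
    have hbdd : BddBelow (E '' Perm) :=
      ⟨E X₀, by rintro y ⟨Y, hY, rfl⟩; exact hX₀min' Y (hPermSub hY)⟩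
    have h2 : sInf (E '' Perm) ≤ E X₀ := csInf_le hbdd (Set.mem_image_of_mem E hX₀Perm)
    have h3 : E X₀ ≤ sInf (E '' Perm) := by
      apply le_csInf ⟨E X₀, Set.mem_image_of_mem E hX₀Perm⟩
      rintro y ⟨Y, hY, rfl⟩
      exact hX₀min' Y (hPermSub hY)
    rw [h1]
    exact le_antisymm h3 h2
  · intro X hXDS hXglob
    exact part1 X hXDS (eventually_nhdsWithin_of_forall hXglob)
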